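/- For all x₁, x₂ in the alternating group A_5, at least one of the following holds: x₁⁶ = 1, x₂⁶ = 1, (x₁x₂)⁶ = 1, (x₁x₂²)⁶ = 1, (x₁x₂³)⁶ = 1, or (x₁x₂⁴)⁶ = 1. -/
import Mathlib
set_option maxRecDepth 10000

open Equiv Equiv.Perm

private def σ₀ : Equiv.Perm (Fin 5) := finRotate 5

set_option maxHeartbeats 1000000 in
private lemma L1 : ∀ a : Equiv.Perm (Fin 5), Equiv.Perm.sign a = 1 → a ^ 6 = 1 ∨ a ^ 5 = 1 := by
  decide

set_option maxHeartbeats 4000000 in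
private lemma L2 : ∀ a : Equiv.Perm (Fin 5), Equiv.Perm.sign a = 1 →
    a ^ 6 = 1 ∨ (a * σ₀) ^ 6 = 1 ∨ (a * σ₀ ^ 2) ^ 6 = 1 ∨ (a * σ₀ ^ 3) ^ 6 = 1 ∨
      (a * σ₀ ^ 4) ^ 6 = 1 := by
  decide

private lemma cycleType_σ₀ : σ₀.cycleType = {5} := by decide

private lemma conj_of_order5 (b : Equiv.Perm (Fin 5)) (hb : orderOf b = 5) :
    ∃ c : Equiv.Perm (Fin 5), c * b * c⁻¹ = σ₀ := by
  rw [← isConj_iff]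
  rw [isConj_iff_cycleType_eq, cycleType_σ₀]
  obtain ⟨n, hn⟩ := cycleType_prime_order (σ := b) (by rw [hb]; norm_num)
  rw [hb] at hn
  have hsum : b.cycleType.sum = b.support.card := b.sum_cycleType
  have hle : b.support.card ≤ 5 := by
    simpa using (b.support.card_le_univ)
  rw [hn, Multiset.sum_replicate, smul_eq_mul] at hsum
  have hn0 : n = 0 := by omega
  rw [hn, hn0]
  rfl

theorem stmt_9 (x₁ x₂ : alternatingGroup (Fin 5)) :
    x₁ ^ 6 = 1 ∨ x₂ ^ 6 = 1 ∨ (x₁ * x₂) ^ 6 = 1 ∨ (x₁ * x₂ ^ 2) ^ 6 = 1 ∨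
      (x₁ * x₂ ^ 3) ^ 6 = 1 ∨ (x₁ * x₂ ^ 4) ^ 6 = 1 := by
  obtain ⟨a, ha⟩ := x₁
  obtain ⟨b, hb⟩ := x₂
  rw [Equiv.Perm.mem_alternatingGroup] at ha hb
  simp only [← Subtype.coe_inj, SubmonoidClass.coe_pow, Subgroup.coe_mul, OneMemClass.coe_one]
  rcases L1 b hb with h6 | h5
  · exact Or.inr (Or.inl h6)
  by_cases hb1 : b = 1
  · subst hb1; exact Or.inr (Or.inl (one_pow 6))
  have hord : orderOf b = 5 := by
    have hdvd : orderOf b ∣ 5 := orderOf_dvd_of_pow_eq_one h5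
    rcases (Nat.prime_five.eq_one_or_self_of_dvd _ hdvd) with h | h
    · exact absurd (orderOf_eq_one_iff.mp h) hb1
    · exact h
  obtain ⟨c, hc⟩ := conj_of_order5 b hord
  have hbk : ∀ k : ℕ, σ₀ ^ k = c * b ^ k * c⁻¹ := fun k => by rw [← hc, conj_pow]
  have hconv : ∀ k : ℕ, (c * a * c⁻¹ * σ₀ ^ k) ^ 6 = c * (a * b ^ k) ^ 6 * c⁻¹ := by
    intro k
    rw [hbk, ← conj_pow (a := c) (b := a * b ^ k)]
    congr 1
    group
  have hone : ∀ g : Equiv.Perm (Fin 5), c * g * c⁻¹ = 1 → g = 1 := by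
    intro g hg
    have := congrArg (fun z => c⁻¹ * z * c) hg
    simpa [mul_assoc] using this
  rcases L2 (c * a * c⁻¹) (by simp [ha]) with h | h | h | h | h
  · rw [conj_pow] at h
    exact Or.inl (hone _ h)
  · rw [← pow_one σ₀, hconv 1, pow_one] at h
    exact Or.inr (Or.inr (Or.inl (hone _ h)))
  · rw [hconv 2] at h
    exact Or.inr (Or.inr (Or.inr (Or.inl (hone _ h))))
  · rw [hconv 3] at h
    exact Or.inr (Or.inr (Or.inr (Or.inr (Or.inl (hone _ h)))))
  · rw [hconv 4] at h
    exact Or.inr (Or.inr (Or.inr (Or.inr (Or.inr (hone _ h)))))
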